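/- The KT redundancy bound for the binary alphabet: for any sequence l^n with symbol counts a, b (a+b = n, n ≥ 1) and any θ ∈ [0,1], -log KT(l^n) ≤ -log(θ^a (1-θ)^b) + (1/2)·log n + 1, where log is base 2. -/

import Mathlib

set_option maxHeartbeats 2000000

/-- The sequential Krichevsky–Trofimov probability of a binary sequence, with the most
recent symbol at the head of the list: `KT [] = 1` and
`KT (x :: t) = KT t · (count of x in t + 1/2)/(|t| + 1)`. -/
noncomputable def ktBin : List Bool → ℝ
  | [] => 1
  | x :: t => ktBin t * (((t.count x : ℝ) + 1 / 2) / ((t.length : ℝ) + 1))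

/-- Negative base-2 logarithm with the convention `-log 0 = ∞`, valued in `EReal`. -/
noncomputable def negLog2 (x : ℝ) : EReal :=
  if x = 0 then ⊤ else ((-Real.logb 2 x : ℝ) : EReal)

/-- Fourth-order Taylor bound for `log (1+v)`. -/
lemma log_taylor4 (v : ℝ) (h0 : 0 < v) (h1 : v < 1) :
    |Real.log (1 + v) - (v - v^2/2 + v^3/3 - v^4/4)| ≤ v^5 / (1 - v) := by
  have habs : |(-v)| < 1 := by rw [abs_neg, abs_of_pos h0]; exact h1
  have h := Real.abs_log_sub_add_sum_range_le habs 4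
  rw [abs_neg, abs_of_pos h0] at h
  have hsum : (∑ i ∈ Finset.range 4, (-v) ^ (i + 1) / ((i : ℝ) + 1))
      = -(v - v^2/2 + v^3/3 - v^4/4) := by
    simp [Finset.sum_range_succ]; ring
  rw [hsum, show (1 : ℝ) - -v = 1 + v by ring, neg_add_eq_sub] at h
  exact h

/-- `exp (2/k) ≤ c` from a rational power bound. -/
lemma exp_two_div_le (c : ℝ) (k : ℕ) (hk : k ≠ 0) (hc : 0 ≤ c)
    (h : (2.7182818286 : ℝ)^2 ≤ c ^ k) : Real.exp (2 / k) ≤ c := by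
  apply le_of_pow_le_pow_left₀ hk hc
  rw [← Real.exp_nat_mul]
  have hk' : (k : ℝ) ≠ 0 := Nat.cast_ne_zero.mpr hk
  rw [show (k : ℝ) * (2 / k) = 2 by field_simp]
  have h1 := Real.exp_one_lt_d9
  have h2 : Real.exp 2 = Real.exp 1 * Real.exp 1 := by
    rw [← Real.exp_add]; norm_num
  nlinarith [Real.exp_pos 1]

lemma log_le_one_of_le (c : ℝ) (hc : 0 < c) (h : c ≤ 2.7182818283) : Real.log c ≤ 1 := by
  rw [Real.log_le_iff_le_exp hc]
  nlinarith [Real.exp_one_gt_d9]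

/-- L1 : `(n + 1/2) * log(1 + 1/n) ≥ 1` for `n ≥ 1`. -/
lemma L1 (n : ℕ) (hn : 1 ≤ n) :
    1 ≤ ((n : ℝ) + 1/2) * (Real.log ((n : ℝ) + 1) - Real.log n) := by
  have hn0 : (0 : ℝ) < n := by exact_mod_cast hn
  have hlog : Real.log ((n : ℝ) + 1) - Real.log n = Real.log (1 + 1/n) := by
    rw [← Real.log_div (by positivity) (ne_of_gt hn0)]
    congr 1; field_simp
  rw [hlog]
  by_cases h5 : 5 ≤ n
  · -- series case
    have hx : (5 : ℝ) ≤ n := by exact_mod_cast h5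
    set x : ℝ := (n : ℝ) with hxdef
    have hv0 : 0 < 1/x := by positivity
    have hv1 : 1/x < 1 := by rw [div_lt_one (by linarith)]; linarith
    have ht := (abs_le.mp (log_taylor4 (1/x) hv0 hv1)).1
    have hlb : (1/x) - (1/x)^2/2 + (1/x)^3/3 - (1/x)^4/4 - (1/x)^5/(1 - 1/x)
        ≤ Real.log (1 + 1/x) := by linarith
    have hkey : 1 ≤ (x + 1/2) * ((1/x) - (1/x)^2/2 + (1/x)^3/3 - (1/x)^4/4 - (1/x)^5/(1 - 1/x)) := by
      have hexp : (x + 1/2) * ((1/x) - (1/x)^2/2 + (1/x)^3/3 - (1/x)^4/4 - (1/x)^5/(1 - 1/x))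
          = 1 + (2*x^3 - 4*x^2 - 25*x - 9) / (24 * x^4 * (x - 1)) := by
        have hx0 : x ≠ 0 := by linarith
        have hx1 : x - 1 ≠ 0 := by linarith
        have h1x : 1 - 1/x = (x-1)/x := by field_simp
        rw [h1x]
        field_simp
        ring
      rw [hexp]
      have hnum : 0 ≤ (2*x^3 - 4*x^2 - 25*x - 9) := by nlinarith [sq_nonneg (x-5), sq_nonneg x]
      have hden : 0 < 24 * x^4 * (x - 1) := by
        have : (0:ℝ) < x - 1 := by linarith
        positivity
      nlinarith [div_nonneg hnum (le_of_lt hden)]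
    calc (1:ℝ) ≤ _ := hkey
      _ ≤ (x + 1/2) * Real.log (1 + 1/x) := by
          apply mul_le_mul_of_nonneg_left hlb (by positivity)
  · -- small cases
    have hlb : Real.exp (2 / ((2*n+1 : ℕ) : ℝ)) ≤ 1 + 1/(n:ℝ) := by
      apply exp_two_div_le _ _ (by omega) (by positivity)
      interval_cases n <;> norm_num
    have h2 : 2 / ((2*n+1 : ℕ) : ℝ) ≤ Real.log (1 + 1/n) := by
      rw [Real.le_log_iff_exp_le (by positivity)]
      exact hlb
    have hfin : ((n:ℝ) + 1/2) * (2 / ((2*n+1 : ℕ) : ℝ)) = 1 := by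
      push_cast
      field_simp
    calc (1:ℝ) = _ := hfin.symm
      _ ≤ ((n:ℝ) + 1/2) * Real.log (1 + 1/n) :=
          mul_le_mul_of_nonneg_left h2 (by positivity)

/-- L2 concrete-case helper. -/
lemma L2concrete (a : ℕ) (ha : 1 ≤ a)
    (h : (((a:ℝ)+1)/a)^a * (((a:ℝ)+1)/((a:ℝ)+1/2)) ≤ 2.7182818283) :
    (a:ℝ) * (Real.log ((a:ℝ)+1) - Real.log a) + (Real.log ((a:ℝ)+1) - Real.log ((a:ℝ)+1/2)) ≤ 1 := by
  have ha0 : (0:ℝ) < a := by exact_mod_cast ha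
  have h1 : (a:ℝ) * (Real.log ((a:ℝ)+1) - Real.log a) = Real.log ((((a:ℝ)+1)/a)^a) := by
    rw [Real.log_pow, Real.log_div (by positivity) (ne_of_gt ha0)]
  have h2 : Real.log ((a:ℝ)+1) - Real.log ((a:ℝ)+1/2) = Real.log (((a:ℝ)+1)/((a:ℝ)+1/2)) := by
    rw [Real.log_div (by positivity) (by positivity)]
  rw [h1, h2, ← Real.log_mul (by positivity) (by positivity)]
  exact log_le_one_of_le _ (by positivity) h

/-- L2 : `a * log(1+1/a) + log((a+1)/(a+1/2)) ≤ 1` for all naturals `a`. -/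
lemma L2 (a : ℕ) :
    (a:ℝ) * (Real.log ((a:ℝ)+1) - Real.log a) + (Real.log ((a:ℝ)+1) - Real.log ((a:ℝ)+1/2)) ≤ 1 := by
  by_cases h6 : 6 ≤ a
  · -- series case
    have hx : (6 : ℝ) ≤ a := by exact_mod_cast h6
    set x : ℝ := (a : ℝ) with hxdef
    have hx0 : (0:ℝ) < x := by linarith
    have hlog1 : Real.log (x+1) - Real.log x = Real.log (1 + 1/x) := by
      rw [← Real.log_div (by positivity) (ne_of_gt hx0)]; congr 1; field_simp
    have hlog2 : Real.log (x+1) - Real.log (x+1/2) = Real.log (1 + 1/(2*x+1)) := by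
      rw [← Real.log_div (by positivity) (by positivity)]; congr 1; field_simp; ring
    rw [hlog1, hlog2]
    have hv0 : 0 < 1/x := by positivity
    have hv1 : 1/x < 1 := by rw [div_lt_one hx0]; linarith
    have hw0 : 0 < 1/(2*x+1) := by positivity
    have hw1 : 1/(2*x+1) < 1 := by rw [div_lt_one (by linarith)]; linarith
    have htv := (abs_le.mp (log_taylor4 (1/x) hv0 hv1)).2
    have htw := (abs_le.mp (log_taylor4 (1/(2*x+1)) hw0 hw1)).2
    have hubv : Real.log (1 + 1/x)
        ≤ (1/x) - (1/x)^2/2 + (1/x)^3/3 - (1/x)^4/4 + (1/x)^5/(1 - 1/x) := by linarith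
    have hubw : Real.log (1 + 1/(2*x+1))
        ≤ (1/(2*x+1)) - (1/(2*x+1))^2/2 + (1/(2*x+1))^3/3 - (1/(2*x+1))^4/4
          + (1/(2*x+1))^5/(1 - 1/(2*x+1)) := by linarith
    have hkey : x * ((1/x) - (1/x)^2/2 + (1/x)^3/3 - (1/x)^4/4 + (1/x)^5/(1 - 1/x))
        + ((1/(2*x+1)) - (1/(2*x+1))^2/2 + (1/(2*x+1))^3/3 - (1/(2*x+1))^4/4
          + (1/(2*x+1))^5/(1 - 1/(2*x+1))) ≤ 1 := by
      have hx1 : x - 1 ≠ 0 := by linarith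
      have h1x : 1 - 1/x = (x-1)/x := by field_simp
      have h1w : 1 - 1/(2*x+1) = (2*x)/(2*x+1) := by field_simp; ring
      have hexp : x * ((1/x) - (1/x)^2/2 + (1/x)^3/3 - (1/x)^4/4 + (1/x)^5/(1 - 1/x))
          + ((1/(2*x+1)) - (1/(2*x+1))^2/2 + (1/(2*x+1))^3/3 - (1/(2*x+1))^4/4
            + (1/(2*x+1))^5/(1 - 1/(2*x+1)))
          = 1 - (8*x^6 - 159*x^4 - 385*x^3 - 308*x^2 - 113*x - 15)
              / (12 * x^3 * (x-1) * (2*x+1)^4) := by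
        rw [h1x, h1w]
        have h2x1 : (2*x+1) ≠ 0 := by linarith
        field_simp
        ring
      rw [hexp]
      have hnum : 0 ≤ (8*x^6 - 159*x^4 - 385*x^3 - 308*x^2 - 113*x - 15) := by
        nlinarith [sq_nonneg (x-6), sq_nonneg x, sq_nonneg (x^2-36), sq_nonneg (x^2 - 6*x)]
      have hden : 0 < 12 * x^3 * (x-1) * (2*x+1)^4 := by
        have : (0:ℝ) < x - 1 := by linarith
        positivity
      nlinarith [div_nonneg hnum (le_of_lt hden)]
    have hmul : x * Real.log (1 + 1/x)
        ≤ x * ((1/x) - (1/x)^2/2 + (1/x)^3/3 - (1/x)^4/4 + (1/x)^5/(1 - 1/x)) :=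
      mul_le_mul_of_nonneg_left hubv (le_of_lt hx0)
    linarith
  · -- a ≤ 5
    match a, h6 with
    | 0, _ =>
      have h2 : Real.log 2 ≤ 1 := log_le_one_of_le 2 (by norm_num) (by norm_num)
      have hi : Real.log ((2:ℝ)⁻¹) = - Real.log 2 := Real.log_inv 2
      norm_num [hi]
      linarith
    | 1, _ => exact L2concrete 1 le_rfl (by norm_num)
    | 2, _ => exact L2concrete 2 (by norm_num) (by norm_num)
    | 3, _ => exact L2concrete 3 (by norm_num) (by norm_num)
    | 4, _ => exact L2concrete 4 (by norm_num) (by norm_num)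
    | 5, _ => exact L2concrete 5 (by norm_num) (by norm_num)
    | (n+6), h6 => exact absurd (by omega) h6

/-- The closed-form lower-bound function `(a/n)^a (b/n)^b / (2√n)`, `n = a + b`. -/
noncomputable def Fkt (a b : ℕ) : ℝ :=
  ((a:ℝ)/((a:ℝ)+(b:ℝ)))^a * ((b:ℝ)/((a:ℝ)+(b:ℝ)))^b / (2 * Real.sqrt ((a:ℝ)+(b:ℝ)))

lemma ratpow_pos (k : ℕ) (m : ℝ) (hm : 0 < m) : 0 < ((k:ℝ)/m)^k := by
  rcases Nat.eq_zero_or_pos k with hk | hk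
  · subst hk; norm_num
  · have : (0:ℝ) < (k:ℝ)/m := by
      apply div_pos _ hm; exact_mod_cast hk
    positivity

lemma log_ratpow (k : ℕ) (m : ℝ) (hm : 0 < m) :
    Real.log (((k:ℝ)/m)^k) = k * (Real.log k - Real.log m) := by
  rcases Nat.eq_zero_or_pos k with hk | hk
  · subst hk; simp
  · have hk0 : (0:ℝ) < k := by exact_mod_cast hk
    rw [Real.log_pow, Real.log_div (ne_of_gt hk0) (ne_of_gt hm)]

lemma Fkt_pos (a b : ℕ) (h : 1 ≤ a + b) : 0 < Fkt a b := by
  have hn : (0:ℝ) < (a:ℝ)+(b:ℝ) := by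
    have : (0:ℝ) < ((a+b : ℕ) : ℝ) := by exact_mod_cast h
    push_cast at this; linarith
  unfold Fkt
  have h1 := ratpow_pos a _ hn
  have h2 := ratpow_pos b _ hn
  have h3 : 0 < Real.sqrt ((a:ℝ)+(b:ℝ)) := Real.sqrt_pos.mpr hn
  positivity

lemma log_Fkt (a b : ℕ) (h : 1 ≤ a + b) :
    Real.log (Fkt a b) =
      (a:ℝ) * (Real.log a - Real.log ((a:ℝ)+(b:ℝ)))
      + (b:ℝ) * (Real.log b - Real.log ((a:ℝ)+(b:ℝ)))
      - (Real.log 2 + Real.log ((a:ℝ)+(b:ℝ)) / 2) := by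
  have hn : (0:ℝ) < (a:ℝ)+(b:ℝ) := by
    have : (0:ℝ) < ((a+b : ℕ) : ℝ) := by exact_mod_cast h
    push_cast at this; linarith
  have h1 := ratpow_pos a _ hn
  have h2 := ratpow_pos b _ hn
  have h3 : 0 < Real.sqrt ((a:ℝ)+(b:ℝ)) := Real.sqrt_pos.mpr hn
  unfold Fkt
  rw [Real.log_div (by positivity) (by positivity), Real.log_mul (ne_of_gt h1) (ne_of_gt h2),
    log_ratpow a _ hn, log_ratpow b _ hn, Real.log_mul (by norm_num) (ne_of_gt h3),
    Real.log_sqrt (le_of_lt hn)]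

/-- Key step: adding one more `true` symbol. -/
lemma KS (a b : ℕ) (h : 1 ≤ a + b) :
    Fkt (a+1) b ≤ Fkt a b * (((a:ℝ) + 1/2) / ((a:ℝ) + (b:ℝ) + 1)) := by
  have hn : (0:ℝ) < (a:ℝ)+(b:ℝ) := by
    have : (0:ℝ) < ((a+b : ℕ) : ℝ) := by exact_mod_cast h
    push_cast at this; linarith
  have hstep : (0:ℝ) < ((a:ℝ) + 1/2) / ((a:ℝ) + (b:ℝ) + 1) := by positivity
  have hL := Fkt_pos (a+1) b (by omega)
  have hR : 0 < Fkt a b * (((a:ℝ) + 1/2) / ((a:ℝ) + (b:ℝ) + 1)) :=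
    mul_pos (Fkt_pos a b h) hstep
  rw [← Real.log_le_log_iff hL hR]
  rw [Real.log_mul (ne_of_gt (Fkt_pos a b h)) (ne_of_gt hstep),
    Real.log_div (by positivity) (by positivity),
    log_Fkt a b h, log_Fkt (a+1) b (by omega)]
  push_cast
  have hl1 := L1 (a+b) h
  have hl2 := L2 a
  push_cast at hl1
  have hab1 : Real.log ((a:ℝ) + 1 + (b:ℝ)) = Real.log ((a:ℝ) + (b:ℝ) + 1) := by ring_nf
  rw [hab1]
  nlinarith [hl1, hl2]

lemma Fkt_comm (a b : ℕ) : Fkt a b = Fkt b a := by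
  unfold Fkt
  rw [add_comm (b:ℝ) (a:ℝ)]
  ring

lemma count_length (l : List Bool) : l.count true + l.count false = l.length := by
  induction l with
  | nil => simp
  | cons x t ih => cases x <;> simp [List.count_cons] <;> omega

lemma ktBin_ge (l : List Bool) (h : 1 ≤ l.length) :
    Fkt (l.count true) (l.count false) ≤ ktBin l := by
  induction l with
  | nil => simp at h
  | cons x t ih =>
    rcases Nat.eq_zero_or_pos t.length with ht0 | ht1
    · have ht : t = [] := List.length_eq_zero_iff.mp ht0
      subst ht
      cases x <;> simp [ktBin, Fkt] <;> norm_num [Real.sqrt_one]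
    · have ih' := ih ht1
      have hab : t.count true + t.count false = t.length := count_length t
      have hlen : ((t.length : ℕ) : ℝ) = (t.count true : ℝ) + (t.count false : ℝ) := by
        exact_mod_cast congrArg (Nat.cast : ℕ → ℝ) hab.symm
      set a := t.count true with ha
      set b := t.count false with hb
      have hFpos : 0 < Fkt a b := Fkt_pos a b (by omega)
      cases x
      · -- false
        have hc1 : (false :: t).count true = a := by simp [List.count_cons, ha]
      
        have hc2 : (false :: t).count false = b + 1 := by simp [List.count_cons, hb]
        show Fkt ((false :: t).count true) ((false :: t).count false) ≤
          ktBin t * (((t.count false : ℝ) + 1 / 2) / ((t.length : ℝ) + 1))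
        rw [hc1, hc2, hlen]
        have hKS := KS b a (by omega)
        rw [Fkt_comm a (b+1), Fkt_comm a b] at *
        calc Fkt (b+1) a ≤ Fkt b a * (((b:ℝ) + 1/2) / ((b:ℝ) + (a:ℝ) + 1)) := KS b a (by omega)
          _ ≤ ktBin t * (((b:ℝ) + 1/2) / ((b:ℝ) + (a:ℝ) + 1)) := by
              apply mul_le_mul_of_nonneg_right _ (by positivity)
              rw [← Fkt_comm a b] at ih' ⊢
              exact ih'
          _ = ktBin t * (((b:ℝ) + 1/2) / ((a:ℝ) + (b:ℝ) + 1)) := by ring_nf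
      · -- true
        have hc1 : (true :: t).count true = a + 1 := by simp [List.count_cons, ha]
        have hc2 : (true :: t).count false = b := by simp [List.count_cons, hb]
        show Fkt ((true :: t).count true) ((true :: t).count false) ≤
          ktBin t * (((t.count true : ℝ) + 1 / 2) / ((t.length : ℝ) + 1))
        rw [hc1, hc2, hlen]
        calc Fkt (a+1) b ≤ Fkt a b * (((a:ℝ) + 1/2) / ((a:ℝ) + (b:ℝ) + 1)) := KS a b (by omega)
          _ ≤ ktBin t * (((a:ℝ) + 1/2) / ((a:ℝ) + (b:ℝ) + 1)) :=
              mul_le_mul_of_nonneg_right ih' (by positivity)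

lemma ktBin_pos (l : List Bool) : 0 < ktBin l := by
  induction l with
  | nil => norm_num [ktBin]
  | cons x t ih =>
    have : (0:ℝ) < ((t.count x : ℝ) + 1 / 2) / ((t.length : ℝ) + 1) := by positivity
    exact mul_pos ih this

lemma bern_le (θ : ℝ) (hθ0 : 0 ≤ θ) (hθ1 : θ ≤ 1) (a b : ℕ) (h : 1 ≤ a + b) :
    θ^a * (1-θ)^b ≤ ((a:ℝ)/((a:ℝ)+(b:ℝ)))^a * ((b:ℝ)/((a:ℝ)+(b:ℝ)))^b := by
  have hN : (0:ℝ) < (a:ℝ)+(b:ℝ) := by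
    have : (0:ℝ) < ((a+b : ℕ) : ℝ) := by exact_mod_cast h
    push_cast at this; linarith
  set N : ℝ := (a:ℝ)+(b:ℝ) with hNdef
  rcases Nat.eq_zero_or_pos a with ha | hapos
  · subst ha
    simp only [Nat.cast_zero, pow_zero, one_mul]
    have hbN : (0:ℝ)/N = 0 := by simp
    have hbp : (0:ℝ) < b := by exact_mod_cast (show 0 < b by omega)
    have : (b:ℝ)/N = 1 := by
      rw [hNdef]; push_cast; field_simp; ring
    rw [this, one_pow]
    exact pow_le_one₀ (by linarith) (by linarith)
  rcases Nat.eq_zero_or_pos b with hb | hbpos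
  · subst hb
    simp only [Nat.cast_zero, pow_zero, mul_one]
    have : (a:ℝ)/N = 1 := by
      rw [hNdef]; push_cast; field_simp; ring
    rw [this, one_pow]
    exact pow_le_one₀ hθ0 hθ1
  have ha0 : (0:ℝ) < a := by exact_mod_cast hapos
  have hb0 : (0:ℝ) < b := by exact_mod_cast hbpos
  have hRpos : 0 < ((a:ℝ)/N)^a * ((b:ℝ)/N)^b := by positivity
  rcases eq_or_lt_of_le hθ0 with hθz | hθp
  · rw [← hθz, zero_pow (by omega), zero_mul]; exact le_of_lt hRpos
  rcases eq_or_lt_of_le hθ1 with hθo | hθlt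
  · rw [hθo]; rw [sub_self, zero_pow (by omega), mul_zero]; exact le_of_lt hRpos
  -- now 0 < θ < 1, a,b ≥ 1 : AM-GM
  have h1θ : 0 < 1 - θ := by linarith
  have hg := Real.geom_mean_le_arith_mean2_weighted
    (w₁ := (a:ℝ)/N) (w₂ := (b:ℝ)/N) (p₁ := θ*N/(a:ℝ)) (p₂ := (1-θ)*N/(b:ℝ))
    (by positivity) (by positivity) (by positivity) (by positivity)
    (by rw [hNdef]; field_simp)
  have harith : ((a:ℝ)/N) * (θ*N/(a:ℝ)) + ((b:ℝ)/N) * ((1-θ)*N/(b:ℝ)) = 1 := by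
    field_simp; ring
  rw [harith] at hg
  have hXnn : (0:ℝ) ≤ (θ*N/(a:ℝ)) ^ ((a:ℝ)/N) * ((1-θ)*N/(b:ℝ)) ^ ((b:ℝ)/N) := by
    have h1 : (0:ℝ) ≤ (θ*N/(a:ℝ)) ^ ((a:ℝ)/N) := Real.rpow_nonneg (by positivity) _
    have h2 : (0:ℝ) ≤ ((1-θ)*N/(b:ℝ)) ^ ((b:ℝ)/N) := Real.rpow_nonneg (by positivity) _
    positivity
  have hpow := pow_le_one₀ hXnn hg (n := a + b)
  have hNnat : ((a + b : ℕ) : ℝ) = N := by rw [hNdef]; push_cast; ring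
  have heq : ((θ*N/(a:ℝ)) ^ ((a:ℝ)/N) * ((1-θ)*N/(b:ℝ)) ^ ((b:ℝ)/N)) ^ (a+b)
      = (θ*N/(a:ℝ))^a * ((1-θ)*N/(b:ℝ))^b := by
    rw [mul_pow,
      ← Real.rpow_natCast ((θ*N/(a:ℝ)) ^ ((a:ℝ)/N)) (a+b),
      ← Real.rpow_natCast (((1-θ)*N/(b:ℝ)) ^ ((b:ℝ)/N)) (a+b),
      ← Real.rpow_mul (by positivity), ← Real.rpow_mul (by positivity),
      hNnat,
      show (a:ℝ)/N * N = (a:ℝ) by field_simp,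
      show (b:ℝ)/N * N = (b:ℝ) by field_simp,
      Real.rpow_natCast, Real.rpow_natCast]
  rw [heq] at hpow
  have e1 : (θ*N/(a:ℝ)) * ((a:ℝ)/N) = θ := by field_simp
  have e2 : ((1-θ)*N/(b:ℝ)) * ((b:ℝ)/N) = 1-θ := by field_simp
  calc θ^a * (1-θ)^b
      = ((θ*N/(a:ℝ)) * ((a:ℝ)/N))^a * (((1-θ)*N/(b:ℝ)) * ((b:ℝ)/N))^b := by rw [e1, e2]
    _ = ((θ*N/(a:ℝ))^a * ((1-θ)*N/(b:ℝ))^b) * (((a:ℝ)/N)^a * ((b:ℝ)/N)^b) := by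
        rw [mul_pow, mul_pow]; ring
    _ ≤ 1 * (((a:ℝ)/N)^a * ((b:ℝ)/N)^b) := by
        apply mul_le_mul_of_nonneg_right hpow (le_of_lt hRpos)
    _ = ((a:ℝ)/N)^a * ((b:ℝ)/N)^b := one_mul _

theorem ktBin_redundancy (l : List Bool) (hn : 1 ≤ l.length)
    (θ : ℝ) (hθ : θ ∈ Set.Icc (0 : ℝ) 1) :
    negLog2 (ktBin l) ≤
      negLog2 (θ ^ l.count true * (1 - θ) ^ l.count false) +
        ((1 / 2 * Real.logb 2 l.length + 1 : ℝ) : EReal) := by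
  obtain ⟨hθ0, hθ1⟩ := hθ
  have hab : l.count true + l.count false = l.length := count_length l
  have hK := ktBin_pos l
  have hKF := ktBin_ge l hn
  have hn0 : (0:ℝ) < (l.length : ℝ) := by exact_mod_cast hn
  have hNr : ((l.count true : ℕ):ℝ) + ((l.count false : ℕ):ℝ) = (l.length : ℝ) := by
    exact_mod_cast congrArg (Nat.cast : ℕ → ℝ) hab
  have hbern := bern_le θ hθ0 hθ1 (l.count true) (l.count false) (by omega)
  by_cases hQ : θ ^ l.count true * (1 - θ) ^ l.count false = 0
  · rw [show negLog2 (θ ^ l.count true * (1 - θ) ^ l.count false) = ⊤ from if_pos hQ,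
      EReal.top_add_coe]
    exact le_top
  · have hQpos : 0 < θ ^ l.count true * (1 - θ) ^ l.count false :=
      lt_of_le_of_ne (mul_nonneg (pow_nonneg hθ0 _) (pow_nonneg (by linarith) _)) (Ne.symm hQ)
    have hsq : 0 < Real.sqrt (l.length : ℝ) := Real.sqrt_pos.mpr hn0
    have hchain : (θ ^ l.count true * (1 - θ) ^ l.count false) / (2 * Real.sqrt (l.length : ℝ))
        ≤ ktBin l := by
      calc (θ ^ l.count true * (1 - θ) ^ l.count false) / (2 * Real.sqrt (l.length : ℝ))
          ≤ (((l.count true : ℝ)/((l.count true : ℝ)+(l.count false : ℝ)))^(l.count true)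
            * ((l.count false : ℝ)/((l.count true : ℝ)+(l.count false : ℝ)))^(l.count false))
            / (2 * Real.sqrt (l.length : ℝ)) := by
            exact div_le_div_of_nonneg_right hbern (by positivity)
        _ = Fkt (l.count true) (l.count false) := by unfold Fkt; rw [hNr]
        _ ≤ ktBin l := hKF
    have hlogb := (Real.logb_le_logb (by norm_num : (1:ℝ) < 2)
      (by positivity) hK).mpr hchain
    have hsqeq : Real.logb 2 (Real.sqrt (l.length : ℝ)) = Real.logb 2 (l.length : ℝ) / 2 := by
      unfold Real.logb
      rw [Real.log_sqrt (le_of_lt hn0)]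
      ring
    have hexpand : Real.logb 2 ((θ ^ l.count true * (1 - θ) ^ l.count false)
          / (2 * Real.sqrt (l.length : ℝ)))
        = Real.logb 2 (θ ^ l.count true * (1 - θ) ^ l.count false)
          - (1 + Real.logb 2 (l.length : ℝ) / 2) := by
      rw [Real.logb_div hQ (by positivity),
        Real.logb_mul (by norm_num) (ne_of_gt hsq),
        Real.logb_self_eq_one (by norm_num : (1:ℝ) < 2), hsqeq]
    rw [hexpand] at hlogb
    have hreal : -Real.logb 2 (ktBin l) ≤
        -Real.logb 2 (θ ^ l.count true * (1 - θ) ^ l.count false)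
          + (1/2 * Real.logb 2 (l.length : ℝ) + 1) := by linarith
    rw [show negLog2 (ktBin l) = ((-Real.logb 2 (ktBin l) : ℝ) : EReal) from if_neg (ne_of_gt hK),
      show negLog2 (θ ^ l.count true * (1 - θ) ^ l.count false)
        = ((-Real.logb 2 (θ ^ l.count true * (1 - θ) ^ l.count false) : ℝ) : EReal) from if_neg hQ,
      ← EReal.coe_add]
    exact EReal.coe_le_coe_iff.mpr hreal
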